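/- arXiv:2407.16561 — 2 statements merged into one kernel-verified Lean document; each statement's English description precedes it below -/
import Mathlib

section
/- For all natural numbers n and k, k' ≤ n, the weighted row orthogonality relation Σ_{m=0}^{n} binom(n, m) * C(n, k, m) * C(n, k', m) equals 2^n * binom(n, k) if k = k' and equals 0 if k ≠ k'. -/
open Finset

/-- Generalized binomial (Kravchuk) coefficient:
`C(n,k,m) = Σ_{l=0}^{m} (-1)^l * binom(n-m, k-l) * binom(m, l)`,
with the convention that the binomial vanishes for a negative lower index
(encoded by the `if l ≤ k` guard, since we use natural subtraction). -/
def kravC (n k m : ℕ) : ℤ :=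
  ∑ l ∈ Finset.range (m + 1),
    (-1 : ℤ) ^ l * (if l ≤ k then ((n - m).choose (k - l) : ℤ) else 0) * (m.choose l : ℤ)

lemma coeff_one_sub_X_pow (m l : ℕ) :
    (((1 : Polynomial ℤ) - Polynomial.X) ^ m).coeff l = (-1 : ℤ) ^ l * m.choose l := by
  have h : ((1 : Polynomial ℤ) - Polynomial.X) ^ m
      = (-1 : Polynomial ℤ) ^ m * (Polynomial.X + Polynomial.C (-1 : ℤ)) ^ m := by
    rw [← mul_pow]
    congr 1
    simp only [Polynomial.C_neg, Polynomial.C_1]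
    ring
  have hC : ((-1 : Polynomial ℤ) ^ m) = Polynomial.C ((-1 : ℤ) ^ m) := by
    rw [map_pow, Polynomial.C_neg, Polynomial.C_1]
  rw [h, hC, Polynomial.coeff_C_mul, Polynomial.coeff_X_add_C_pow]
  rcases le_or_gt l m with hlm | hlm
  · have hs : (-1 : ℤ) ^ m * (-1) ^ (m - l) = (-1) ^ l := by
      rw [← pow_add]
      have : m + (m - l) = 2 * (m - l) + l := by omega
      rw [this, pow_add, pow_mul]
      simp
    rw [← mul_assoc, hs]
  · rw [Nat.choose_eq_zero_of_lt hlm]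
    ring

/-- `kravC n k m` is the `k`-th coefficient of `(1-X)^m (1+X)^(n-m)`. -/
lemma kravC_eq_coeff (n k m : ℕ) :
    kravC n k m =
      ((((1 : Polynomial ℤ) - Polynomial.X) ^ m *
        ((1 : Polynomial ℤ) + Polynomial.X) ^ (n - m))).coeff k := by
  rw [Polynomial.coeff_mul, Finset.Nat.sum_antidiagonal_eq_sum_range_succ_mk]
  have hco : ∀ l ∈ Finset.range (k + 1),
      ((((1 : Polynomial ℤ) - Polynomial.X) ^ m).coeff l *
        (((1 : Polynomial ℤ) + Polynomial.X) ^ (n - m)).coeff (k - l))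
      = (-1 : ℤ) ^ l * (if l ≤ k then ((n - m).choose (k - l) : ℤ) else 0) * (m.choose l : ℤ) := by
    intro l hl
    rw [Finset.mem_range] at hl
    rw [coeff_one_sub_X_pow, Polynomial.coeff_one_add_X_pow, if_pos (by omega)]
    ring
  rw [Finset.sum_congr rfl hco]
  unfold kravC
  have key : ∀ (N : ℕ), m + 1 ≤ N →
      (∑ l ∈ Finset.range N,
        (-1 : ℤ) ^ l * (if l ≤ k then ((n - m).choose (k - l) : ℤ) else 0) * (m.choose l : ℤ))
      = ∑ l ∈ Finset.range (m + 1),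
        (-1 : ℤ) ^ l * (if l ≤ k then ((n - m).choose (k - l) : ℤ) else 0) * (m.choose l : ℤ) := by
    intro N hN
    refine (Finset.sum_subset (Finset.range_subset_range.2 hN) ?_).symm
    intro l _ hl
    rw [Finset.mem_range, not_lt] at hl
    simp [Nat.choose_eq_zero_of_lt (show m < l by omega)]
  have key2 : ∀ (N : ℕ), k + 1 ≤ N →
      (∑ l ∈ Finset.range N,
        (-1 : ℤ) ^ l * (if l ≤ k then ((n - m).choose (k - l) : ℤ) else 0) * (m.choose l : ℤ))
      = ∑ l ∈ Finset.range (k + 1),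
        (-1 : ℤ) ^ l * (if l ≤ k then ((n - m).choose (k - l) : ℤ) else 0) * (m.choose l : ℤ) := by
    intro N hN
    refine (Finset.sum_subset (Finset.range_subset_range.2 hN) ?_).symm
    intro l _ hl
    rw [Finset.mem_range, not_lt] at hl
    rw [if_neg (by omega)]
    simp
  rw [← key (m + k + 1) (by omega), ← key2 (m + k + 1) (by omega)]

theorem kravC_row_orthogonality (n k k' : ℕ) (hk : k ≤ n) (hk' : k' ≤ n) :
    (∑ m ∈ Finset.range (n + 1), (n.choose m : ℤ) * kravC n k m * kravC n k' m) =
      if k = k' then (2 : ℤ) ^ n * (n.choose k : ℤ) else 0 := by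
  classical
  -- Work in S = (ℤ[X])[X]; outer variable x, inner variable y = C X.
  let f : ℕ → Polynomial ℤ := fun m =>
    ((1 : Polynomial ℤ) - Polynomial.X) ^ m * ((1 : Polynomial ℤ) + Polynomial.X) ^ (n - m)
  let x : Polynomial (Polynomial ℤ) := Polynomial.X
  let y : Polynomial (Polynomial ℤ) := Polynomial.C Polynomial.X
  -- key polynomial identity
  have main : (∑ m ∈ Finset.range (n + 1),
      Polynomial.C (Polynomial.C ((n.choose m : ℤ))) *
        ((f m).map Polynomial.C * Polynomial.C (f m)))
      = Polynomial.C (Polynomial.C ((2 : ℤ) ^ n)) * (1 + x * y) ^ n := by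
    have hmap : ∀ m, (f m).map (Polynomial.C : ℤ →+* Polynomial ℤ)
        = (1 - x) ^ m * (1 + x) ^ (n - m) := by
      intro m
      simp only [f, Polynomial.map_mul, Polynomial.map_pow, Polynomial.map_sub,
        Polynomial.map_add, Polynomial.map_one, Polynomial.map_X, x]
    have hC : ∀ m, Polynomial.C (f m) = (1 - y) ^ m * (1 + y) ^ (n - m) := by
      intro m
      simp only [f, map_mul, map_pow, map_sub, map_add, map_one, y]
    have expand : ((1 - x) * (1 - y) + (1 + x) * (1 + y)) ^ n
        = ∑ m ∈ Finset.range (n + 1),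
          ((1 - x) * (1 - y)) ^ m * ((1 + x) * (1 + y)) ^ (n - m) * (n.choose m : Polynomial (Polynomial ℤ)) := by
      rw [add_pow]
    have hnc : ∀ m : ℕ, ((n.choose m : ℕ) : Polynomial (Polynomial ℤ))
        = Polynomial.C (Polynomial.C ((n.choose m : ℤ))) := by
      intro m; simp
    have lhs_eq : (∑ m ∈ Finset.range (n + 1),
        Polynomial.C (Polynomial.C ((n.choose m : ℤ))) *
          ((f m).map Polynomial.C * Polynomial.C (f m)))
        = ((1 - x) * (1 - y) + (1 + x) * (1 + y)) ^ n := by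
      rw [expand]
      apply Finset.sum_congr rfl
      intro m _
      rw [hmap, hC, ← hnc, mul_pow, mul_pow]
      ring
    have h2C : Polynomial.C (Polynomial.C ((2 : ℤ) ^ n)) = (2 : Polynomial (Polynomial ℤ)) ^ n := by
      rw [map_pow, map_pow, map_ofNat, map_ofNat]
    rw [lhs_eq, h2C, show ((1 - x) * (1 - y) + (1 + x) * (1 + y))
        = 2 * (1 + x * y) by ring, mul_pow]
  have hcoeff : Polynomial.coeff (Polynomial.coeff (∑ m ∈ Finset.range (n + 1),
      Polynomial.C (Polynomial.C ((n.choose m : ℤ))) *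
        ((f m).map Polynomial.C * Polynomial.C (f m))) k) k'
      = Polynomial.coeff (Polynomial.coeff
          (Polynomial.C (Polynomial.C ((2 : ℤ) ^ n)) * (1 + x * y) ^ n) k) k' := by
    rw [main]
  -- LHS coefficient computation
  have lhsc : Polynomial.coeff (Polynomial.coeff (∑ m ∈ Finset.range (n + 1),
      Polynomial.C (Polynomial.C ((n.choose m : ℤ))) *
        ((f m).map Polynomial.C * Polynomial.C (f m))) k) k'
      = ∑ m ∈ Finset.range (n + 1), (n.choose m : ℤ) * kravC n k m * kravC n k' m := by
    rw [Polynomial.finset_sum_coeff, Polynomial.finset_sum_coeff]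
    apply Finset.sum_congr rfl
    intro m _
    rw [Polynomial.coeff_C_mul, Polynomial.coeff_mul_C, Polynomial.coeff_map,
      Polynomial.coeff_C_mul, Polynomial.coeff_C_mul]
    rw [kravC_eq_coeff n k m, kravC_eq_coeff n k' m]
    ring
  -- RHS coefficient computation
  have rhsc : Polynomial.coeff (Polynomial.coeff
      (Polynomial.C (Polynomial.C ((2 : ℤ) ^ n)) * (1 + x * y) ^ n) k) k'
      = if k = k' then (2 : ℤ) ^ n * (n.choose k : ℤ) else 0 := by
    rw [Polynomial.coeff_C_mul, Polynomial.coeff_C_mul]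
    have hexp : ((1 : Polynomial (Polynomial ℤ)) + x * y) ^ n
        = ∑ j ∈ Finset.range (n + 1),
            Polynomial.C ((Polynomial.X : Polynomial ℤ) ^ j * (n.choose j : Polynomial ℤ)) * x ^ j := by
      rw [add_comm (1 : Polynomial (Polynomial ℤ)) (x * y), add_pow]
      apply Finset.sum_congr rfl
      intro j _
      have hxy : (x * y) ^ j = Polynomial.C ((Polynomial.X : Polynomial ℤ) ^ j) * x ^ j := by
        rw [mul_pow, map_pow]
        ring
      rw [one_pow, mul_one, hxy]
      have hnc : ((n.choose j : ℕ) : Polynomial (Polynomial ℤ))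
          = Polynomial.C ((n.choose j : Polynomial ℤ)) := by simp
      rw [hnc, map_mul]
      ring
    rw [hexp, Polynomial.finset_sum_coeff]
    have hterm : ∀ j ∈ Finset.range (n + 1),
        (Polynomial.C ((Polynomial.X : Polynomial ℤ) ^ j * (n.choose j : Polynomial ℤ)) * x ^ j).coeff k
        = if k = j then (Polynomial.X : Polynomial ℤ) ^ j * (n.choose j : Polynomial ℤ) else 0 := by
      intro j _
      rw [Polynomial.coeff_C_mul]
      show _ * (Polynomial.X ^ j).coeff k = _
      rw [Polynomial.coeff_X_pow]
      split <;> simp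
    rw [Finset.sum_congr rfl hterm, Finset.sum_ite_eq (Finset.range (n + 1)) k,
      if_pos (Finset.mem_range.2 (by omega))]
    rw [Polynomial.coeff_mul_natCast, Polynomial.coeff_X_pow]
    by_cases h : k = k'
    · subst h; simp
    · rw [if_neg h, if_neg (fun hh => h hh.symm)]
      simp
  rw [lhsc, rhsc] at hcoeff
  exact hcoeff
end

section
/- For all natural numbers n, k ≤ n, and m ≤ n, the reflection relation C(n, k, n - m) = (-1)^k * C(n, k, m) holds. -/
open Finset

open Polynomial in
lemma coeff_comp_neg_X (p : ℤ[X]) (k : ℕ) :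
    (p.comp (-X)).coeff k = (-1) ^ k * p.coeff k := by
  rw [comp_eq_sum_left, Polynomial.sum, finset_sum_coeff]
  have h : ∀ e ∈ p.support, (Polynomial.C (p.coeff e) * (-X : ℤ[X]) ^ e).coeff k
      = if k = e then (-1 : ℤ) ^ k * p.coeff k else 0 := by
    intro e _
    rw [neg_pow, ← mul_assoc, mul_comm (C (p.coeff e)), mul_assoc, ← C_1, ← C_neg, ← C_pow,
      coeff_C_mul, coeff_C_mul, coeff_X_pow]
    split_ifs with h
    · subst h; ring
    · ring
  rw [Finset.sum_congr rfl h, Finset.sum_ite_eq p.support k]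
  split_ifs with h
  · rfl
  · rw [Polynomial.notMem_support_iff.mp h, mul_zero]

open Polynomial in
lemma coeff_one_sub_X_pow_s11 (b l : ℕ) :
    (((1 - X) ^ b : ℤ[X])).coeff l = (-1) ^ l * (b.choose l : ℤ) := by
  have : ((1 - X) ^ b : ℤ[X]) = (((1 + X) ^ b : ℤ[X])).comp (-X) := by
    simp [sub_eq_add_neg]
  rw [this, coeff_comp_neg_X, coeff_one_add_X_pow]

open Polynomial in
lemma coeff_prod_krav (a b k : ℕ) :
    ∑ l ∈ Finset.range (b + 1),
      (-1 : ℤ) ^ l * (if l ≤ k then (a.choose (k - l) : ℤ) else 0) * (b.choose l : ℤ)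
      = (((1 - X) ^ b * (1 + X) ^ a : ℤ[X])).coeff k := by
  set g : ℕ → ℤ := fun l =>
    (-1 : ℤ) ^ l * (if l ≤ k then (a.choose (k - l) : ℤ) else 0) * (b.choose l : ℤ) with hg
  rw [coeff_mul, Finset.Nat.sum_antidiagonal_eq_sum_range_succ_mk]
  have h1 : ∀ l ∈ Finset.range (k + 1),
      (((1 - X) ^ b : ℤ[X])).coeff l * (((1 + X) ^ a : ℤ[X])).coeff (k - l) = g l := by
    intro l hl
    rw [Finset.mem_range, Nat.lt_succ_iff] at hl
    rw [coeff_one_sub_X_pow_s11, coeff_one_add_X_pow, hg]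
    simp only [if_pos hl]; ring
  rw [Finset.sum_congr rfl h1]
  have h2 : ∑ l ∈ Finset.range (k + 1), g l = ∑ l ∈ Finset.range (k + b + 1), g l := by
    apply Finset.sum_subset
    · exact Finset.range_subset_range.2 (by omega)
    · intro l _ hl
      rw [Finset.mem_range, Nat.lt_succ_iff, not_le] at hl
      rw [hg]; simp only [if_neg (by omega : ¬ l ≤ k)]; ring
  have h3 : ∑ l ∈ Finset.range (b + 1), g l = ∑ l ∈ Finset.range (k + b + 1), g l := by
    apply Finset.sum_subset
    · exact Finset.range_subset_range.2 (by omega)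
    · intro l _ hl
      rw [Finset.mem_range, Nat.lt_succ_iff, not_le] at hl
      simp [hg, Nat.choose_eq_zero_of_lt hl]
  rw [h2, ← h3]

open Polynomial

theorem kravC_reflection (n k m : ℕ) (hk : k ≤ n) (hm : m ≤ n) :
    kravC n k (n - m) = (-1 : ℤ) ^ k * kravC n k m := by
  have hm' : n - (n - m) = m := by omega
  rw [kravC, kravC, hm', coeff_prod_krav m (n - m) k, coeff_prod_krav (n - m) m k,
    show ((1 - X) ^ (n - m) * (1 + X) ^ m : ℤ[X])
      = (((1 - X) ^ m * (1 + X) ^ (n - m) : ℤ[X])).comp (-X) by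
        rw [mul_comp, pow_comp, pow_comp, sub_comp, add_comp, one_comp, X_comp]; ring,
    coeff_comp_neg_X]
end
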